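/- The map z ↦ z·e^{1−z} is injective on the open unit disk {z ∈ ℂ : |z| < 1}. -/

import Mathlib

/-- Integral bound: `|e^w - 1| ≤ |w| * max 1 e^{Re w}`. -/
lemma abs_exp_sub_one_le_aux (w : ℂ) :
    ‖Complex.exp w - 1‖ ≤ ‖w‖ * max 1 (Real.exp w.re) := by
  have hd : ∀ t ∈ Set.uIcc (0:ℝ) 1,
      HasDerivAt (fun t : ℝ => Complex.exp (t * w)) (Complex.exp (t * w) * w) t := by
    intro t _
    have h1 : HasDerivAt (fun t : ℝ => (t : ℂ) * w) w t := by
      simpa using (Complex.ofRealCLM.hasDerivAt (x := t)).mul_const w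
    simpa using h1.cexp
  have hint : IntervalIntegrable (fun t : ℝ => Complex.exp (t * w) * w)
      MeasureTheory.volume 0 1 := by
    apply Continuous.intervalIntegrable
    exact (Complex.continuous_exp.comp (by continuity)).mul continuous_const
  have heq := intervalIntegral.integral_eq_sub_of_hasDerivAt hd hint
  have heq2 : (∫ t in (0:ℝ)..1, Complex.exp (t * w) * w) = Complex.exp w - 1 := by
    rw [heq]; push_cast; simp
  have hbd := intervalIntegral.norm_integral_le_of_norm_le_const
    (a := (0:ℝ)) (b := 1) (f := fun t : ℝ => Complex.exp (t * w) * w)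
    (C := ‖w‖ * max 1 (Real.exp w.re)) ?_
  · rw [heq2] at hbd
    simpa using hbd
  · intro t ht
    rw [Set.uIoc_of_le (by norm_num : (0:ℝ) ≤ 1)] at ht
    have h0 : (0:ℝ) < t := ht.1
    have h1 : t ≤ 1 := ht.2
    have hre : ((t : ℂ) * w).re = t * w.re := by simp
    have : ‖Complex.exp ((t:ℂ) * w) * w‖ = Real.exp (t * w.re) * ‖w‖ := by
      simp [Complex.norm_exp, hre]
    rw [this]
    have hle : Real.exp (t * w.re) ≤ max 1 (Real.exp w.re) := by
      rcases le_or_gt w.re 0 with h | h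
      · have : t * w.re ≤ 0 := mul_nonpos_of_nonneg_of_nonpos h0.le h
        exact le_max_of_le_left (by simpa using Real.exp_le_exp.mpr this)
      · have : t * w.re ≤ w.re := by nlinarith
        exact le_max_of_le_right (Real.exp_le_exp.mpr this)
    calc Real.exp (t * w.re) * ‖w‖
        ≤ max 1 (Real.exp w.re) * ‖w‖ :=
          mul_le_mul_of_nonneg_right hle (norm_nonneg w)
      _ = ‖w‖ * max 1 (Real.exp w.re) := mul_comm _ _

/-- The map `z ↦ z e^{1−z}` is injective on the open unit disk. -/
theorem injOn_unit_disk :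
    Set.InjOn (fun z : ℂ => z * Complex.exp (1 - z)) {z : ℂ | ‖z‖ < 1} := by
  intro a ha b hb hab
  by_contra hne
  simp only [Set.mem_setOf_eq] at ha hb
  simp only at hab
  set w := b - a with hw
  have hwne : w ≠ 0 := sub_ne_zero.mpr (Ne.symm hne)
  -- b = a * exp w
  have hba : b = a * Complex.exp w := by
    have h1 : a * Complex.exp (1 - a) * Complex.exp (b - 1) =
        b * Complex.exp (1 - b) * Complex.exp (b - 1) := by rw [hab]
    rw [mul_assoc, mul_assoc, ← Complex.exp_add, ← Complex.exp_add] at h1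
    simpa [hw, show 1 - a + (b - 1) = b - a by ring] using h1.symm
  have hE : a * (Complex.exp w - 1) = w := by
    rw [mul_sub, ← hba]; ring
  have hE2 : b * (Complex.exp w - 1) = w * Complex.exp w := by
    rw [hba, show a * Complex.exp w * (Complex.exp w - 1)
        = a * (Complex.exp w - 1) * Complex.exp w from by ring, hE]
  set E := ‖Complex.exp w - 1‖ with hEdef
  have hEpos : 0 < E := by
    rcases eq_or_lt_of_le (norm_nonneg (Complex.exp w - 1)) with h | h
    · exfalso
      have : Complex.exp w - 1 = 0 := by
        simpa [hEdef] using (norm_eq_zero.mp h.symm)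
      rw [this, mul_zero] at hE
      exact hwne hE.symm
    · exact h
  have h1 : ‖w‖ < E := by
    have := congrArg (‖·‖) hE
    rw [norm_mul] at this
    calc ‖w‖ = ‖a‖ * E := this.symm
      _ < 1 * E := by exact mul_lt_mul_of_pos_right ha hEpos
      _ = E := one_mul E
  have h2 : ‖w‖ * Real.exp w.re < E := by
    have := congrArg (‖·‖) hE2
    rw [norm_mul, norm_mul, Complex.norm_exp] at this
    calc ‖w‖ * Real.exp w.re = ‖b‖ * E := this.symm
      _ < 1 * E := mul_lt_mul_of_pos_right hb hEpos
      _ = E := one_mul E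
  have hkey := abs_exp_sub_one_le_aux w
  rw [← hEdef] at hkey
  have : ‖w‖ * max 1 (Real.exp w.re) < E := by
    rcases max_cases 1 (Real.exp w.re) with ⟨h, _⟩ | ⟨h, _⟩
    · rw [h, mul_one]; exact h1
    · rw [h]; exact h2
  linarith
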